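/- Let μ be a Lyndon word, let W be any string, and let a, b ∈ [0, |μ|) with a ≠ b. Let X = μ_{a+1}·μ·W and Y = μ_{b+1}·μ·W. Then whether X ≺ Y does not depend on W: for any strings W and W', μ_{a+1}·μ·W ≺ μ_{b+1}·μ·W if and only if μ_{a+1}·μ·W' ≺ μ_{b+1}·μ·W'. -/
import Mathlib


variable {α : Type*} [LinearOrder α]

/-- A Lyndon word: nonempty and strictly smaller than all of its proper nonempty suffixes. -/
def IsLyndon (s : List α) : Prop :=
  s ≠ [] ∧ ∀ i, 0 < i → i < s.length → List.Lex (· < ·) s (s.drop i)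

/-- The `i`-th suffix of `S` (1-indexed); `sfx S 0 = []` plays the role of the sentinel
suffix `S₀ = $`, and `sfx S (n+1) = []` plays the role of `S_{n+1} = $`
(the empty list is lexicographically smaller than every nonempty list). -/
def sfx (S : List α) (i : ℕ) : List α := if i = 0 then [] else S.drop (i - 1)

open scoped Classical in
/-- `pss S j = max {k ∈ [0,j) : S_k ≺ S_j}`. -/
noncomputable def pss (S : List α) (j : ℕ) : ℕ :=
  Nat.findGreatest (fun k => List.Lex (· < ·) (sfx S k) (sfx S j)) (j - 1)

/-- `nss S i = min {j ∈ (i, n+1] : S_j ≺ S_i}`. -/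
noncomputable def nss (S : List α) (i : ℕ) : ℕ :=
  sInf {j | i < j ∧ j ≤ S.length + 1 ∧ List.Lex (· < ·) (sfx S j) (sfx S i)}

/-- Length of the longest common prefix of two lists. -/
def lcp : List α → List α → ℕ
  | a :: s, b :: t => if a = b then lcp s t + 1 else 0
  | _, _ => 0

/-- The PSS closure: all iterates of `pss` starting from `j`. -/
noncomputable def pssClosure (S : List α) (j : ℕ) : Set ℕ :=
  {k | ∃ m, (pss S)^[m] j = k}

open scoped Classical in
/-- Size of the subtree of node `i` in the PSS tree of `S`. -/
noncomputable def subtreeSize (S : List α) (i : ℕ) : ℕ :=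
  ((Finset.range (S.length + 1)).filter
    (fun j => j = i ∨ ∃ m, 0 < m ∧ (pss S)^[m] j = i)).card

open scoped Classical in
/-- `lam S i`: length of the longest Lyndon word starting at position `i` (1-indexed). -/
noncomputable def lam (S : List α) (i : ℕ) : ℕ :=
  Nat.findGreatest (fun ℓ => IsLyndon ((S.drop (i - 1)).take ℓ)) (S.length + 1 - i)

/-- for a Lyndon word `μ` and `a ≠ b` in `[0, |μ|)`, whether
`μ_{a+1}·μ·W ≺ μ_{b+1}·μ·W` does not depend on the appended string `W`. -/

private lemma lex_mismatch {s t : List α} (h : List.Lex (· < ·) s t)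
    (hlen : t.length ≤ s.length) :
    ∃ C x y s' t', s = C ++ x :: s' ∧ t = C ++ y :: t' ∧ x < y := by
  induction h with
  | nil => simp at hlen
  | rel h => exact ⟨[], _, _, _, _, rfl, rfl, h⟩
  | @cons a s t h ih =>
      obtain ⟨C, x, y, s', t', hs, ht, hxy⟩ := ih (by simpa using hlen)
      exact ⟨a :: C, x, y, s', t', by simp [hs], by simp [ht], hxy⟩

private lemma lex_append_iff (C : List α) {x y : α} (hxy : x ≠ y) (s t : List α) :
    List.Lex (· < ·) (C ++ x :: s) (C ++ y :: t) ↔ x < y := by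
  induction C with
  | nil =>
      constructor
      · intro h
        cases h with
        | rel h => exact h
        | cons h => exact absurd rfl hxy
      · exact fun h => List.Lex.rel h
  | cons c C ih =>
      constructor
      · intro h
        cases h with
        | rel h => exact absurd h (lt_irrefl c)
        | cons h => exact ih.1 h
      · intro h
        exact List.Lex.cons (ih.2 h)

private lemma exists_mismatch : ∀ (X Y : List α), ¬ X <+: Y → ¬ Y <+: X →
    ∃ C x y s t, X = C ++ x :: s ∧ Y = C ++ y :: t ∧ x ≠ y
  | [], _, h1, _ => absurd List.nil_prefix h1
  | (_ :: _), [], _, h2 => absurd List.nil_prefix h2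
  | (x :: X), (y :: Y), h1, h2 => by
      by_cases hxy : x = y
      · subst hxy
        obtain ⟨C, u, v, s, t, hs, ht, huv⟩ := exists_mismatch X Y
          (fun h => h1 (List.cons_prefix_cons.2 ⟨rfl, h⟩))
          (fun h => h2 (List.cons_prefix_cons.2 ⟨rfl, h⟩))
        exact ⟨x :: C, u, v, s, t, by simp [hs], by simp [ht], huv⟩
      · exact ⟨[], x, y, X, Y, rfl, rfl, hxy⟩

private lemma not_prefix_drop (μ : List α) (hμ : IsLyndon μ) {a b : ℕ}
    (hab : a < b) (hb : b < μ.length) :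
    ¬ ((μ ++ μ).drop b <+: (μ ++ μ).drop a) := by
  intro hpre
  set n := μ.length with hn
  set p := b - a with hp
  have hp0 : 0 < p := by omega
  have hpn : p < n := by omega
  have hlex := hμ.2 p hp0 hpn
  obtain ⟨C, x, y, s', t', hs, ht, hxy⟩ := lex_mismatch hlex (by simp)
  set j := C.length with hj
  have hjlt : j + p < n := by
    have h1 := congrArg List.length ht
    simp at h1
    omega
  have hjn : j < n := by omega
  have hx : μ[j]'(by omega) = x := by
    rw [List.getElem_of_eq hs]
    simp [hj, List.getElem_append_right]
  have hy : μ[j + p]'(by omega) = y := by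
    have h2 : (μ.drop p)[j]'(by simp; omega) = y := by
      rw [List.getElem_of_eq ht]
      simp [hj, List.getElem_append_right]
    rw [List.getElem_drop] at h2
    rw [← h2]
    congr 1
    omega
  obtain ⟨T, hT⟩ := hpre
  set i := n + j - a with hi
  have hilen : i < ((μ ++ μ).drop b).length := by simp; omega
  have hilen' : i < ((μ ++ μ).drop a).length := by simp; omega
  have heq : ((μ ++ μ).drop a)[i]'hilen' = ((μ ++ μ).drop b)[i]'hilen := by
    rw [List.getElem_of_eq hT.symm, List.getElem_append_left]
  rw [List.getElem_drop, List.getElem_drop] at heq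
  have e1 : (μ ++ μ)[a + i]'(by simp; omega) = μ[j]'hjn := by
    rw [List.getElem_append_right (by omega)]
    congr 1
    omega
  have e2 : (μ ++ μ)[b + i]'(by simp; omega) = μ[j + p]'(by omega) := by
    rw [List.getElem_append_right (by omega)]
    congr 1
    omega
  rw [e1, e2, hx, hy] at heq
  exact absurd heq (ne_of_lt hxy)

private lemma mismatch_of_lt (μ : List α) (hμ : IsLyndon μ) {a b : ℕ}
    (hab : a < b) (hb : b < μ.length) :
    ∃ C x y s t, μ.drop a ++ μ = C ++ x :: s ∧ μ.drop b ++ μ = C ++ y :: t ∧ x ≠ y := by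
  have hda : μ.drop a ++ μ = (μ ++ μ).drop a :=
    (List.drop_append_of_le_length (by omega)).symm
  have hdb : μ.drop b ++ μ = (μ ++ μ).drop b :=
    (List.drop_append_of_le_length (by omega)).symm
  rw [hda, hdb]
  apply exists_mismatch
  · intro h
    have := h.length_le
    simp at this
    omega
  · exact not_prefix_drop μ hμ hab hb

theorem stmt8 (μ : List α) (hμ : IsLyndon μ) (a b : ℕ)
    (ha : a < μ.length) (hb : b < μ.length) (hab : a ≠ b) (W W' : List α) :
    (List.Lex (· < ·) (μ.drop a ++ μ ++ W) (μ.drop b ++ μ ++ W) ↔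
      List.Lex (· < ·) (μ.drop a ++ μ ++ W') (μ.drop b ++ μ ++ W')) := by
  have key : ∃ C x y s t, μ.drop a ++ μ = C ++ x :: s ∧ μ.drop b ++ μ = C ++ y :: t ∧ x ≠ y := by
    rcases lt_or_gt_of_ne hab with h | h
    · exact mismatch_of_lt μ hμ h hb
    · obtain ⟨C, x, y, s, t, h1, h2, hxy⟩ := mismatch_of_lt μ hμ h ha
      exact ⟨C, y, x, t, s, h2, h1, hxy.symm⟩
  obtain ⟨C, x, y, s, t, h1, h2, hxy⟩ := key
  rw [h1, h2]
  simp only [List.append_assoc, List.cons_append]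
  rw [lex_append_iff C hxy, lex_append_iff C hxy]
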